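/- Let u ∈ C²(ℝ) be positive, bounded, with u nonincreasing on [x₂,∞), and suppose u satisfies −cu' + (vu)' = u'' + u(1−u) where v, v' are continuous. Let underline_u(x) = A sin(π(x − x₂)/(Rσ)) on [x₂, x₂+Rσ] with A > 0, and suppose at some x₀ ∈ (x₂, x₂+Rσ) we have u(x₀) = underline_u(x₀), u'(x₀) = underline_u'(x₀) ≤ 0, u''(x₀) ≥ underline_u''(x₀), and v(x₀) ≥ c. If additionally u(x₀)² < underline_u(x₀)·θ/σ and v'(x₀) < |χ|θ/σ², then 0 > underline_u(x₀)·(1 − θ/σ − |χ|θ/σ² − π²/(R²σ²)). -/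

import Mathlib

open Real

/-- Touching-point computation for the sine subsolution in case two of the fast-wave
theorem: at a contact point `x₀` one gets
`0 > underline_u(x₀)(1 − θ/σ − |χ|θ/σ² − π²/(R²σ²))`. -/
theorem stmt16 (u v : ℝ → ℝ) (c χ θ σ R A x₂ x₀ : ℝ)
    (hσ : 0 < σ) (hR : 0 < R) (hA : 0 < A) (hθ : 0 < θ)
    (hu : ContDiff ℝ 2 u) (hv : Differentiable ℝ v)
    (hupos : ∀ x, 0 < u x) (hubdd : ∃ M, ∀ x, u x ≤ M)
    (hmono : AntitoneOn u (Set.Ici x₂))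
    (heq : ∀ x, -c * deriv u x + deriv (fun y => v y * u y) x
        = deriv (deriv u) x + u x * (1 - u x)) :
    let ul : ℝ → ℝ := fun x => A * Real.sin (π * (x - x₂) / (R * σ))
    x₀ ∈ Set.Ioo x₂ (x₂ + R * σ) →
    u x₀ = ul x₀ →
    deriv u x₀ = deriv ul x₀ →
    deriv ul x₀ ≤ 0 →
    deriv (deriv ul) x₀ ≤ deriv (deriv u) x₀ →
    c ≤ v x₀ →
    u x₀ ^ 2 < ul x₀ * θ / σ →
    deriv v x₀ < |χ| * θ / σ ^ 2 →
    0 > ul x₀ * (1 - θ / σ - |χ| * θ / σ ^ 2 - π ^ 2 / (R ^ 2 * σ ^ 2)) := by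
  intro ul hx hval hd1 hd1le hd2 hvc hsq hv'
  have hRσ : 0 < R * σ := mul_pos hR hσ
  set k : ℝ := π / (R * σ) with hk
  have hkpos : 0 < k := div_pos Real.pi_pos hRσ
  have hulk : ul = fun x => A * Real.sin (k * (x - x₂)) := by
    funext x; simp only [ul, hk]; ring_nf
  have hder : ∀ x, HasDerivAt ul (A * k * Real.cos (k * (x - x₂))) x := by
    intro x
    have h1 : HasDerivAt (fun x : ℝ => k * (x - x₂)) k x := by
      simpa using ((hasDerivAt_id x).sub_const x₂).const_mul k
    have h2 := (Real.hasDerivAt_sin (k * (x - x₂))).comp x h1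
    have h3 := h2.const_mul A
    rw [hulk]
    exact h3.congr_deriv (by ring)
  have hderiv_ul : deriv ul = fun x => A * k * Real.cos (k * (x - x₂)) := by
    funext x; exact (hder x).deriv
  have hder2 : HasDerivAt (fun x => A * k * Real.cos (k * (x - x₂)))
      (-(A * k * k * Real.sin (k * (x₀ - x₂)))) x₀ := by
    have h1 : HasDerivAt (fun x : ℝ => k * (x - x₂)) k x₀ := by
      simpa using ((hasDerivAt_id x₀).sub_const x₂).const_mul k
    have h2 := (Real.hasDerivAt_cos (k * (x₀ - x₂))).comp x₀ h1
    have h3 := h2.const_mul (A * k)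
    exact h3.congr_deriv (by ring)
  have hdd : deriv (deriv ul) x₀ = -(k ^ 2 * ul x₀) := by
    rw [hderiv_ul, hder2.deriv, hulk]; ring
  have hud : Differentiable ℝ u := hu.differentiable (by norm_num)
  have hprod : deriv (fun y => v y * u y) x₀ = deriv v x₀ * u x₀ + v x₀ * deriv u x₀ :=
    deriv_mul (hv x₀) (hud x₀)
  have heq0 := heq x₀
  rw [hprod] at heq0
  have hulpos : 0 < ul x₀ := by
    rw [hulk]
    apply mul_pos hA
    apply Real.sin_pos_of_pos_of_lt_pi
    · exact mul_pos hkpos (sub_pos.mpr hx.1)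
    · have h1 : x₀ - x₂ < R * σ := by linarith [hx.2]
      have h2 : k * (x₀ - x₂) < k * (R * σ) := by
        exact mul_lt_mul_of_pos_left h1 hkpos
      have h3 : k * (R * σ) = π := by
        rw [hk]; field_simp
      linarith
  have hk2 : k ^ 2 = π ^ 2 / (R ^ 2 * σ ^ 2) := by
    rw [hk, div_pow, mul_pow]
  have hu0 : 0 < u x₀ := hupos x₀
  have hd1' : deriv u x₀ ≤ 0 := by rw [hd1]; exact hd1le
  have hvc' : (v x₀ - c) * deriv u x₀ ≤ 0 :=
    mul_nonpos_of_nonneg_of_nonpos (by linarith) hd1'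
  have hmul : deriv v x₀ * u x₀ < (|χ| * θ / σ ^ 2) * u x₀ :=
    mul_lt_mul_of_pos_right hv' hu0
  have hle : -(k ^ 2 * ul x₀) ≤ deriv (deriv u) x₀ := by
    rw [← hdd]; exact hd2
  rw [← hk2]
  rw [hval] at heq0 hsq hmul
  rw [mul_div_assoc] at hsq
  clear_value ul k
  linarith [hle, heq0, hvc', hmul, hsq]
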